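/- Let H be a real Hilbert space, let I be a countable index set, and for each i ∈ I let f_i : H → ℝ be convex and lower semicontinuous with C_i := {x : f_i(x) ≤ 0} and C := ⋂nonempty_{i ∈ I} C_i; let g_i : H → H be a selection of the subdifferential, g_i(x) ∈ ∂f_i(x). Let Q ⊆ H be nonempty, closed and convex. Consider the method x_0 ∈ Q, x_{k+1} := P_Q( x_k − α_{[k]} Σ_{i ∈ I_k(x_k) ∩ I_+(x_k)} λ_{i,k}(x_k) ((r_{[k]} + f_i(x_k))/‖g_i(x_k)‖²) g_i(x_k) ), where [k] := #{0 ≤ n ≤ k−1 : x_n ≠ x_{n+1}} and I_+(x) := {i : f_i(x) > 0}. Assume: (i') f(z) := sup_{i ∈ I} f_i(z) < 0 for some z ∈ Q; (ii') r_k → 0 and Σ_{k=0}^∞ α_k r_k = ∞ with α_k ∈ (0,2]; (iii') ⋃_{i ∈ I} ∂f_i(S) is bounded for every bounded S ⊆ H; (iv) λ_{i,k}(x) ≥ λ > 0 for all x, k and i ∈ I_k(x) ∩ I_+(x), with Σ_{i ∈ I_k(x)} λ_{i,k}(x) = 1; (v) the control sequence {I_k} (with sup_{x,k} #(I_k(x))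 < ∞) is well matched with C. Then the sequence {x_k} is bounded and x_k ∈ C ∩ Q for some k. -/

import Mathlib

open scoped RealInnerProductSpace Classical
open Finset

lemma proj_VI {H : Type*} [NormedAddCommGroup H] [InnerProductSpace ℝ H]
    (Q : Set H) (hQconvex : Convex ℝ Q) (hQne : Q.Nonempty)
    (PQ : H → H) (hPQmem : ∀ u, PQ u ∈ Q)
    (hPQmin : ∀ u, ∀ w ∈ Q, ‖PQ u - u‖ ≤ ‖w - u‖) :
    ∀ u, ∀ q ∈ Q, ⟪u - PQ u, q - PQ u⟫ ≤ 0 := by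
  intro u q hq
  haveI : Nonempty Q := hQne.to_subtype
  have hinf : ‖u - PQ u‖ = ⨅ w : Q, ‖u - w‖ := by
    apply le_antisymm
    · refine le_ciInf fun w => ?_
      rw [norm_sub_rev, norm_sub_rev u (w : H)]
      exact hPQmin u w w.2
    · exact ciInf_le (⟨0, by rintro _ ⟨w, rfl⟩; exact norm_nonneg _⟩ :
        BddBelow (Set.range fun w : Q => ‖u - (w : H)‖)) ⟨PQ u, hPQmem u⟩
  exact (norm_eq_iInf_iff_real_inner_le_zero hQconvex (hPQmem u)).1 hinf q hq

lemma proj_nonexp {H : Type*} [NormedAddCommGroup H] [InnerProductSpace ℝ H]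
    (Q : Set H) (hQconvex : Convex ℝ Q) (hQne : Q.Nonempty)
    (PQ : H → H) (hPQmem : ∀ u, PQ u ∈ Q)
    (hPQmin : ∀ u, ∀ w ∈ Q, ‖PQ u - u‖ ≤ ‖w - u‖) :
    ∀ u, ∀ q ∈ Q, ‖PQ u - q‖ ≤ ‖u - q‖ := by
  intro u q hq
  have hvi := proj_VI Q hQconvex hQne PQ hPQmem hPQmin u q hq
  have e : u - q = (u - PQ u) + (PQ u - q) := by abel
  have hsq : ‖PQ u - q‖ ^ 2 ≤ ‖u - q‖ ^ 2 := by
    rw [e, norm_add_sq_real]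
    have h2 : ⟪u - PQ u, PQ u - q⟫ = -⟪u - PQ u, q - PQ u⟫ := by
      rw [← neg_sub q (PQ u), inner_neg_right]
    nlinarith [sq_nonneg ‖u - PQ u‖]
  exact le_of_pow_le_pow_left₀ two_ne_zero (norm_nonneg _) hsq

set_option maxHeartbeats 1000000 in
/-- Core per-step estimates for the subgradient projection method. -/
lemma subgrad_step {H : Type*} [NormedAddCommGroup H] [InnerProductSpace ℝ H] {I : Type*}
    (f : I → H → ℝ) (g : I → H → H) (z u : H) (δ : ℝ) (hδ : 0 < δ)
    (hfz : ∀ i, f i z ≤ -δ)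
    (hgu : ∀ i (y : H), f i u + ⟪g i u, y - u⟫ ≤ f i y)
    (T : Finset I) (lam : I → ℝ) (hlamnn : ∀ i ∈ T, 0 ≤ lam i)
    (hlamsum : ∑ i ∈ T, lam i = 1)
    (a ρ : ℝ) (ha : 0 < a) (ha2 : a ≤ 2) (hρ : 0 < ρ) :
    (0 ≤ ∑ i ∈ T, (if 0 < f i u then lam i * ((ρ + f i u) / ‖g i u‖ ^ 2) else 0)) ∧
    ‖u - a • (∑ i ∈ T,
        (if 0 < f i u then lam i * ((ρ + f i u) / ‖g i u‖ ^ 2) else 0) • g i u) - z‖ ^ 2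
      ≤ ‖u - z‖ ^ 2 + 2 * a * (ρ - δ) *
        ∑ i ∈ T, (if 0 < f i u then lam i * ((ρ + f i u) / ‖g i u‖ ^ 2) else 0) ∧
    ‖u - a • (∑ i ∈ T,
        (if 0 < f i u then lam i * ((ρ + f i u) / ‖g i u‖ ^ 2) else 0) • g i u) - z‖
      ≤ (3 + 2 * ρ / δ) * ‖u - z‖ ∧
    (∀ i₀ ∈ T, 0 < f i₀ u → lam i₀ * (ρ / ‖g i₀ u‖ ^ 2)
      ≤ ∑ i ∈ T, (if 0 < f i u then lam i * ((ρ + f i u) / ‖g i u‖ ^ 2) else 0)) ∧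
    (∀ i₀ ∈ T, 0 < f i₀ u → 0 < lam i₀ →
      0 < ⟪(∑ i ∈ T,
        (if 0 < f i u then lam i * ((ρ + f i u) / ‖g i u‖ ^ 2) else 0) • g i u), u - z⟫) := by
  set w : I → ℝ := fun i => if 0 < f i u then lam i * ((ρ + f i u) / ‖g i u‖ ^ 2) else 0 with hw
  set d : H := ∑ i ∈ T, w i • g i u with hd
  -- violated constraints have nonzero subgradient
  have hgne : ∀ i, 0 < f i u → g i u ≠ 0 := by
    intro i hi hzero
    have := hgu i z
    rw [hzero] at this
    simp only [inner_zero_left, add_zero] at this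
    have := hfz i
    linarith
  have hgpos : ∀ i, 0 < f i u → 0 < ‖g i u‖ := fun i hi =>
    norm_pos_iff.2 (hgne i hi)
  have hw0 : ∀ i ∈ T, 0 ≤ w i := by
    intro i hi
    simp only [hw]
    split
    · rename_i h
      exact mul_nonneg (hlamnn i hi) (div_nonneg (by linarith) (sq_nonneg _))
    · exact le_rfl
  have hS0 : 0 ≤ ∑ i ∈ T, w i := Finset.sum_nonneg hw0
  -- key subgradient inequality
  have hkey : ∀ i, f i u + δ ≤ ⟪g i u, u - z⟫ := by
    intro i
    have h1 := hgu i z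
    have h2 : ⟪g i u, z - u⟫ = -⟪g i u, u - z⟫ := by
      rw [← neg_sub u z, inner_neg_right]
    have := hfz i
    rw [h2] at h1
    linarith
  -- inner product expansion
  have hinner : ⟪d, u - z⟫ = ∑ i ∈ T, w i * ⟪g i u, u - z⟫ := by
    rw [hd, sum_inner]
    exact Finset.sum_congr rfl fun i _ => real_inner_smul_left _ _ _
  have hinnerlb : ∑ i ∈ T, w i * (f i u + δ) ≤ ⟪d, u - z⟫ := by
    rw [hinner]
    exact Finset.sum_le_sum fun i hi => mul_le_mul_of_nonneg_left (hkey i) (hw0 i hi)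
  -- term-wise positivity of w i * (f i u + δ)
  have hterm0 : ∀ i ∈ T, 0 ≤ w i * (f i u + δ) := by
    intro i hi
    by_cases h : 0 < f i u
    · exact mul_nonneg (hw0 i hi) (by linarith)
    · simp only [hw, if_neg h, zero_mul, le_refl]
  -- Cauchy-Schwarz setup
  set v : I → ℝ := fun i => if 0 < f i u then lam i else 0 with hv
  set b : I → ℝ := fun i => if 0 < f i u then (ρ + f i u) / ‖g i u‖ else 0 with hb
  have hv0 : ∀ i ∈ T, 0 ≤ v i := by
    intro i hi; simp only [hv]; split
    · exact hlamnn i hi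
    · exact le_rfl
  have hb0 : ∀ i ∈ T, 0 ≤ b i := by
    intro i hi; simp only [hb]; split
    · rename_i h; exact div_nonneg (by linarith) (norm_nonneg _)
    · exact le_rfl
  have hwg : ∀ i ∈ T, w i * ‖g i u‖ = v i * b i := by
    intro i hi
    by_cases h : 0 < f i u
    · have hg' := hgpos i h
      simp only [hw, hv, hb, if_pos h]
      field_simp
    · simp only [hw, hv, hb, if_neg h, zero_mul, mul_zero]
  have hnormd : ‖d‖ ≤ ∑ i ∈ T, v i * b i := by
    calc ‖d‖ ≤ ∑ i ∈ T, ‖w i • g i u‖ := norm_sum_le T _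
      _ = ∑ i ∈ T, v i * b i := Finset.sum_congr rfl fun i hi => by
          rw [norm_smul, Real.norm_eq_abs, abs_of_nonneg (hw0 i hi)]
          exact hwg i hi
  have hvbnn : 0 ≤ ∑ i ∈ T, v i * b i :=
    Finset.sum_nonneg fun i hi => mul_nonneg (hv0 i hi) (hb0 i hi)
  have hvsum : ∑ i ∈ T, v i ≤ 1 := by
    rw [← hlamsum]
    refine Finset.sum_le_sum fun i hi => ?_
    simp only [hv]; split
    · exact le_rfl
    · exact hlamnn i hi
  have hvb2nn : 0 ≤ ∑ i ∈ T, v i * b i ^ 2 :=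
    Finset.sum_nonneg fun i hi => mul_nonneg (hv0 i hi) (sq_nonneg _)
  have hvb2 : (∑ i ∈ T, v i * b i) ^ 2 ≤ ∑ i ∈ T, v i * b i ^ 2 := by
    have cs := Finset.sum_mul_sq_le_sq_mul_sq T (fun i => Real.sqrt (v i))
      (fun i => Real.sqrt (v i) * b i)
    have e1 : ∀ i ∈ T, Real.sqrt (v i) * (Real.sqrt (v i) * b i) = v i * b i := by
      intro i hi
      rw [← mul_assoc, Real.mul_self_sqrt (hv0 i hi)]
    have e2 : ∀ i ∈ T, (Real.sqrt (v i)) ^ 2 = v i := fun i hi => Real.sq_sqrt (hv0 i hi)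
    have e3 : ∀ i ∈ T, (Real.sqrt (v i) * b i) ^ 2 = v i * b i ^ 2 := by
      intro i hi
      rw [mul_pow, Real.sq_sqrt (hv0 i hi)]
    rw [Finset.sum_congr rfl e1, Finset.sum_congr rfl e2, Finset.sum_congr rfl e3] at cs
    calc (∑ i ∈ T, v i * b i) ^ 2 ≤ (∑ i ∈ T, v i) * ∑ i ∈ T, v i * b i ^ 2 := cs
      _ ≤ 1 * ∑ i ∈ T, v i * b i ^ 2 := mul_le_mul_of_nonneg_right hvsum hvb2nn
      _ = ∑ i ∈ T, v i * b i ^ 2 := one_mul _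
  have htdiff : ∀ i ∈ T, v i * b i ^ 2 - w i * (f i u + δ) = (ρ - δ) * w i := by
    intro i hi
    by_cases h : 0 < f i u
    · have hg' := hgpos i h
      simp only [hw, hv, hb, if_pos h]
      field_simp
      ring
    · simp only [hw, hv, hb, if_neg h, zero_mul, mul_zero, zero_pow, sub_zero, OfNat.ofNat_ne_zero,
        ne_eq, not_false_iff, sub_self]
  have hsumdiff : ∑ i ∈ T, v i * b i ^ 2
      = (ρ - δ) * (∑ i ∈ T, w i) + ∑ i ∈ T, w i * (f i u + δ) := by
    rw [Finset.mul_sum, ← Finset.sum_add_distrib]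
    refine Finset.sum_congr rfl fun i hi => ?_
    have := htdiff i hi
    linarith
  -- norm expansion
  have hexp : ‖u - a • d - z‖ ^ 2
      = ‖u - z‖ ^ 2 - 2 * (a * ⟪d, u - z⟫) + a ^ 2 * ‖d‖ ^ 2 := by
    rw [sub_right_comm, @norm_sub_sq_real _ _ _ (u - z) (a • d)]
    rw [real_inner_smul_right, real_inner_comm, norm_smul, Real.norm_eq_abs,
      abs_of_pos ha, mul_pow]
  -- conclusion 1
  have hd2 : ‖d‖ ^ 2 ≤ ∑ i ∈ T, v i * b i ^ 2 :=
    le_trans (pow_le_pow_left₀ (norm_nonneg d) hnormd 2) hvb2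
  have ha2' : a ^ 2 ≤ 2 * a := by nlinarith
  have hconc1 : ‖u - a • d - z‖ ^ 2
      ≤ ‖u - z‖ ^ 2 + 2 * a * (ρ - δ) * ∑ i ∈ T, w i := by
    have k1 : a * ∑ i ∈ T, w i * (f i u + δ) ≤ a * ⟪d, u - z⟫ :=
      mul_le_mul_of_nonneg_left hinnerlb ha.le
    have k2 : a ^ 2 * ‖d‖ ^ 2 ≤ 2 * a * ∑ i ∈ T, v i * b i ^ 2 :=
      mul_le_mul ha2' hd2 (sq_nonneg _) (by positivity)
    nlinarith [hexp, hsumdiff]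
  -- conclusion 2
  have hble : ∀ i ∈ T, v i * b i ≤ lam i * ((1 + ρ / δ) * ‖u - z‖) := by
    intro i hi
    by_cases h : 0 < f i u
    · have hg' := hgpos i h
      have hip : f i u + δ ≤ ‖g i u‖ * ‖u - z‖ :=
        le_trans (hkey i) (real_inner_le_norm _ _)
      have hbb : (ρ + f i u) / ‖g i u‖ ≤ (1 + ρ / δ) * ‖u - z‖ := by
        rw [div_le_iff₀ hg']
        have hh1 : (1 + ρ / δ) * (f i u + δ) ≤ (1 + ρ / δ) * (‖g i u‖ * ‖u - z‖) :=
          mul_le_mul_of_nonneg_left hip (by positivity)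
        have hh2 : ρ / δ * δ = ρ := div_mul_cancel₀ ρ hδ.ne'
        have hh3 : 0 ≤ ρ / δ * f i u := mul_nonneg (by positivity) h.le
        nlinarith
      simp only [hv, hb, if_pos h]
      exact mul_le_mul_of_nonneg_left hbb (hlamnn i hi)
    · simp only [hv, hb, if_neg h, zero_mul]
      exact mul_nonneg (hlamnn i hi) (by positivity)
  have hvble : ∑ i ∈ T, v i * b i ≤ (1 + ρ / δ) * ‖u - z‖ := by
    calc ∑ i ∈ T, v i * b i ≤ ∑ i ∈ T, lam i * ((1 + ρ / δ) * ‖u - z‖) :=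
        Finset.sum_le_sum hble
      _ = (∑ i ∈ T, lam i) * ((1 + ρ / δ) * ‖u - z‖) := by rw [Finset.sum_mul]
      _ = (1 + ρ / δ) * ‖u - z‖ := by rw [hlamsum, one_mul]
  have hconc2 : ‖u - a • d - z‖ ≤ (3 + 2 * ρ / δ) * ‖u - z‖ := by
    have n1 : ‖u - a • d - z‖ ≤ ‖u - z‖ + ‖a • d‖ := by
      rw [sub_right_comm]; exact norm_sub_le _ _
    have n2 : ‖a • d‖ = a * ‖d‖ := by
      rw [norm_smul, Real.norm_eq_abs, abs_of_pos ha]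
    have n3 : a * ‖d‖ ≤ 2 * ((1 + ρ / δ) * ‖u - z‖) := by
      have h1 : a * ‖d‖ ≤ 2 * ‖d‖ := mul_le_mul_of_nonneg_right ha2 (norm_nonneg d)
      have h2 := le_trans hnormd hvble
      linarith
    have heq : (3 + 2 * ρ / δ) * ‖u - z‖ = ‖u - z‖ + 2 * ((1 + ρ / δ) * ‖u - z‖) := by
      field_simp
      ring
    linarith
  -- conclusion 4
  have hconc4 : ∀ i₀ ∈ T, 0 < f i₀ u → lam i₀ * (ρ / ‖g i₀ u‖ ^ 2) ≤ ∑ i ∈ T, w i := by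
    intro i₀ hi₀ h
    have hg' := hgpos i₀ h
    have t1 : lam i₀ * (ρ / ‖g i₀ u‖ ^ 2) ≤ w i₀ := by
      simp only [hw, if_pos h]
      refine mul_le_mul_of_nonneg_left ?_ (hlamnn i₀ hi₀)
      gcongr
      linarith
    exact le_trans t1 (Finset.single_le_sum hw0 hi₀)
  -- conclusion 5
  have hconc5 : ∀ i₀ ∈ T, 0 < f i₀ u → 0 < lam i₀ → 0 < ⟪d, u - z⟫ := by
    intro i₀ hi₀ h hl
    have hg' := hgpos i₀ h
    have t1 : 0 < w i₀ * (f i₀ u + δ) := by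
      have : 0 < w i₀ := by
        simp only [hw, if_pos h]
        exact mul_pos hl (div_pos (by linarith) (by positivity))
      exact mul_pos this (by linarith)
    have t2 := Finset.single_le_sum hterm0 hi₀
    linarith
  exact ⟨hS0, hconc1, hconc2, hconc4, hconc5⟩



set_option maxHeartbeats 1600000 in
/-- Example 4.9 (subgradient projections): under the Slater condition (i'), divergent
overrelaxations (ii'), uniformly bounded subdifferentials (iii'), weights bounded below
(iv) and a well matched control (v), the subgradient projection method with the
correction-step counter `[k]` is bounded and reaches `C ∩ Q` in finitely many steps. -/
theorem stmt13 {H : Type*} [NormedAddCommGroup H] [InnerProductSpace ℝ H] [CompleteSpace H]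
    {I : Type*} [Countable I]
    (f : I → H → ℝ)
    (hconv : ∀ i, ConvexOn ℝ Set.univ (f i))
    (hlsc : ∀ i, LowerSemicontinuous (f i))
    -- a selection of the subdifferential
    (g : I → H → H) (hg : ∀ i (u y : H), f i u + ⟪g i u, y - u⟫ ≤ f i y)
    (Q : Set H) (hQne : Q.Nonempty) (hQclosed : IsClosed Q) (hQconvex : Convex ℝ Q)
    (PQ : H → H) (hPQmem : ∀ u, PQ u ∈ Q)
    (hPQmin : ∀ u, ∀ w ∈ Q, ‖PQ u - u‖ ≤ ‖w - u‖)
    -- the control sequence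
    (Ik : ℕ → H → Finset I) (hIkne : ∀ k u, (Ik k u).Nonempty)
    (M : ℕ) (hIkM : ∀ k u, (Ik k u).card ≤ M)
    -- the weights
    (lam : I → ℕ → H → ℝ) (hlam01 : ∀ i k u, 0 ≤ lam i k u ∧ lam i k u ≤ 1)
    (hlamsum : ∀ k u, ∑ i ∈ Ik k u, lam i k u = 1)
    -- relaxations and overrelaxations
    (α : ℕ → ℝ) (hα : ∀ k, 0 < α k ∧ α k ≤ 2)
    (r : ℕ → ℝ) (hrpos : ∀ k, 0 < r k)
    -- the iterates and the correction-step counter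
    (x : ℕ → H) (cnt : ℕ → ℕ)
    (hcnt0 : cnt 0 = 0)
    (hcnt : ∀ k, cnt k = ((Finset.range k).filter (fun n => x n ≠ x (n + 1))).card)
    (hx0 : x 0 ∈ Q)
    (hxrec : ∀ k, x (k + 1) = PQ (x k - α (cnt k) •
      ∑ i ∈ Ik k (x k),
        (if 0 < f i (x k) then
          lam i k (x k) * ((r (cnt k) + f i (x k)) / ‖g i (x k)‖ ^ 2)
        else 0) • g i (x k)))
    -- (i') Slater condition
    (z : H) (hzQ : z ∈ Q) (hslater : (⨆ i, f i z) < 0)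
    -- (ii') overrelaxations tend to zero, the series diverges
    (hr0 : Filter.Tendsto r Filter.atTop (nhds 0))
    (hdiv : Filter.Tendsto (fun n => ∑ k ∈ Finset.range n, α k * r k)
      Filter.atTop Filter.atTop)
    -- (iii') subdifferentials are uniformly bounded on bounded sets
    (hsubbd : ∀ S : Set H, Bornology.IsBounded S →
      Bornology.IsBounded {gv : H | ∃ i, ∃ u ∈ S, ∀ y, f i u + ⟪gv, y - u⟫ ≤ f i y})
    -- (iv) weights of violated constraints are bounded from below
    (lam0 : ℝ) (hlam0 : 0 < lam0)
    (hlamlb : ∀ i k u, i ∈ Ik k u → 0 < f i u → lam0 ≤ lam i k u)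
    -- (v) the control sequence is well matched with C
    (hwm : ∀ u : H, u ∉ ⋂ i, {v | f i v ≤ 0} →
      {k : ℕ | ∃ i ∈ Ik k u, 0 < f i u}.Infinite) :
    Bornology.IsBounded (Set.range x) ∧
      ∃ k, x k ∈ (⋂ i, {u | f i u ≤ 0}) ∩ Q := by
  classical
  -- Slater constant
  have hneI : Nonempty I := by
    by_contra h
    rw [not_nonempty_iff] at h
    rw [Real.iSup_of_isEmpty] at hslater
    exact lt_irrefl 0 hslater
  have hbdd : BddAbove (Set.range fun i => f i z) := by
    by_contra h
    rw [Real.iSup_of_not_bddAbove h] at hslater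
    exact lt_irrefl 0 hslater
  set δ : ℝ := -(⨆ i, f i z) with hδdef
  have hδ : 0 < δ := by rw [hδdef]; linarith
  have hfz : ∀ i, f i z ≤ -δ := by
    intro i
    have h1 : f i z ≤ ⨆ i, f i z := le_ciSup hbdd i
    rw [hδdef]; linarith
  -- iterates stay in Q
  have hxQ : ∀ k, x k ∈ Q := by
    intro k
    cases k with
    | zero => exact hx0
    | succ n => rw [hxrec n]; exact hPQmem _
  -- projection facts
  have hVI := proj_VI Q hQconvex hQne PQ hPQmem hPQmin
  have hnonexp := proj_nonexp Q hQconvex hQne PQ hPQmem hPQmin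
  have hfix : ∀ u ∈ Q, PQ u = u := by
    intro u hu
    have h1 := hPQmin u u hu
    simp only [sub_self, norm_zero] at h1
    have := norm_le_zero_iff.1 h1
    exact sub_eq_zero.1 this
  -- abbreviations
  set d : ℕ → H := fun k => ∑ i ∈ Ik k (x k),
    (if 0 < f i (x k) then lam i k (x k) * ((r (cnt k) + f i (x k)) / ‖g i (x k)‖ ^ 2)
      else 0) • g i (x k) with hddef
  set y : ℕ → H := fun k => x k - α (cnt k) • d k with hydef
  set S : ℕ → ℝ := fun k => ∑ i ∈ Ik k (x k),
    (if 0 < f i (x k) then lam i k (x k) * ((r (cnt k) + f i (x k)) / ‖g i (x k)‖ ^ 2)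
      else 0) with hSdef
  have hstep := fun k => subgrad_step f g z (x k) δ hδ hfz (fun i yy => hg i (x k) yy)
      (Ik k (x k)) (fun i => lam i k (x k)) (fun i _ => (hlam01 i k (x k)).1)
      (hlamsum k (x k)) (α (cnt k)) (r (cnt k)) (hα (cnt k)).1 (hα (cnt k)).2 (hrpos (cnt k))
  have hS0 : ∀ k, 0 ≤ S k := fun k => (hstep k).1
  have hsq : ∀ k, ‖y k - z‖ ^ 2
      ≤ ‖x k - z‖ ^ 2 + 2 * α (cnt k) * (r (cnt k) - δ) * S k := fun k => (hstep k).2.1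
  have hlin : ∀ k, ‖y k - z‖ ≤ (3 + 2 * r (cnt k) / δ) * ‖x k - z‖ :=
    fun k => (hstep k).2.2.1
  have hSlb : ∀ k i, i ∈ Ik k (x k) → 0 < f i (x k) →
      lam i k (x k) * (r (cnt k) / ‖g i (x k)‖ ^ 2) ≤ S k :=
    fun k i hi h => (hstep k).2.2.2.1 i hi h
  have hdpos : ∀ k i, i ∈ Ik k (x k) → 0 < f i (x k) → 0 < ⟪d k, x k - z⟫ := by
    intro k i hi h
    exact (hstep k).2.2.2.2 i hi h (lt_of_lt_of_le hlam0 (hlamlb i k (x k) hi h))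
  have hxrec' : ∀ k, x (k + 1) = PQ (y k) := fun k => hxrec k
  have hproj1 : ∀ k, ‖x (k + 1) - z‖ ≤ ‖y k - z‖ := by
    intro k
    rw [hxrec' k]
    exact hnonexp (y k) z hzQ
  have hproj2 : ∀ k, ‖x (k + 1) - z‖ ^ 2 ≤ ‖y k - z‖ ^ 2 :=
    fun k => pow_le_pow_left₀ (norm_nonneg _) (hproj1 k) 2
  -- no violated constraint selected ⇒ no move
  have heffne : ∀ k, (∀ i ∈ Ik k (x k), ¬0 < f i (x k)) → x (k + 1) = x k := by
    intro k h
    have hd0 : d k = 0 := by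
      rw [hddef]
      exact Finset.sum_eq_zero fun i hi => by rw [if_neg (h i hi), zero_smul]
    rw [hxrec' k, hydef]
    simp only [hd0, smul_zero, sub_zero]
    exact hfix _ (hxQ k)
  -- a violated selected constraint forces a move
  have hchange : ∀ k i, i ∈ Ik k (x k) → 0 < f i (x k) → x (k + 1) ≠ x k := by
    intro k i hi h hEq
    have hp := hdpos k i hi h
    have hvi := hVI (y k) z hzQ
    rw [← hxrec' k, hEq] at hvi
    have heq2 : ⟪y k - x k, z - x k⟫ = α (cnt k) * ⟪d k, x k - z⟫ := by
      have e1 : y k - x k = -(α (cnt k) • d k) := by rw [hydef]; exact sub_sub_cancel_left _ _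
      rw [e1, inner_neg_left, real_inner_smul_left]
      have e2 : z - x k = -(x k - z) := by abel
      rw [e2, inner_neg_right]
      ring
    have := mul_pos (hα (cnt k)).1 hp
    rw [heq2] at hvi
    linarith
  -- counter recursion
  have hcnts : ∀ k, cnt (k + 1) = if x k = x (k + 1) then cnt k else cnt k + 1 := by
    intro k
    rw [hcnt (k + 1), hcnt k, Finset.range_add_one, Finset.filter_insert]
    by_cases h : x k = x (k + 1)
    · rw [if_neg (by simpa using h), if_pos h]
    · rw [if_pos h, if_neg h, Finset.card_insert_of_notMem (by simp)]
  have hcntmono : Monotone cnt := by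
    apply monotone_nat_of_le_succ
    intro k
    rw [hcnts k]
    split <;> omega
  -- boundedness
  obtain ⟨N₀, hN₀⟩ : ∃ N, ∀ n ≥ N, r n < δ / 2 := by
    have h1 : ∀ᶠ n in Filter.atTop, r n < δ / 2 :=
      hr0.eventually (gt_mem_nhds (by linarith : (0 : ℝ) < δ / 2))
    exact Filter.eventually_atTop.1 h1
  set K : ℕ → ℝ := fun n => 3 + 2 * r n / δ with hKdef
  have hK1 : ∀ n, 1 ≤ K n := by
    intro n
    have h1 : 0 ≤ 2 * r n / δ := div_nonneg (by nlinarith [hrpos n]) hδ.le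
    rw [hKdef]; dsimp only; linarith
  set B : ℝ := ‖x 0 - z‖ * ∏ n ∈ Finset.range N₀, K n with hBdef
  have hdecr : ∀ k, N₀ ≤ cnt k → ‖x (k + 1) - z‖ ≤ ‖x k - z‖ := by
    intro k hk
    have hr' : r (cnt k) - δ < 0 := by
      have := hN₀ (cnt k) hk
      linarith
    have h1 : 2 * α (cnt k) * (r (cnt k) - δ) * S k ≤ 0 := by
      have hαp := (hα (cnt k)).1
      have hSk := hS0 k
      have : 2 * α (cnt k) * (r (cnt k) - δ) ≤ 0 := by nlinarith
      exact mul_nonpos_iff.2 (Or.inr ⟨this, hSk⟩)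
    have h2 : ‖x (k + 1) - z‖ ^ 2 ≤ ‖x k - z‖ ^ 2 := by
      have := hsq k
      have := hproj2 k
      linarith
    exact le_of_pow_le_pow_left₀ two_ne_zero (norm_nonneg _) h2
  have hxb : ∀ k, ‖x k - z‖ ≤ ‖x 0 - z‖ * ∏ n ∈ Finset.range (min (cnt k) N₀), K n := by
    intro k
    induction k with
    | zero =>
      rw [hcnt0]
      simp
    | succ k ih =>
      by_cases hc : x k = x (k + 1)
      · rw [hcnts k, if_pos hc, ← hc]
        exact ih
      · rw [hcnts k, if_neg hc]
        by_cases hn : N₀ ≤ cnt k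
        · have hmin : min (cnt k + 1) N₀ = min (cnt k) N₀ := by omega
          rw [hmin]
          exact le_trans (hdecr k hn) ih
        · push_neg at hn
          have hmin1 : min (cnt k) N₀ = cnt k := by omega
          have hmin2 : min (cnt k + 1) N₀ = cnt k + 1 := by omega
          rw [hmin1] at ih
          rw [hmin2]
          have hKpos : (0 : ℝ) ≤ K (cnt k) := le_trans zero_le_one (hK1 _)
          calc ‖x (k + 1) - z‖ ≤ K (cnt k) * ‖x k - z‖ := le_trans (hproj1 k) (hlin k)
            _ ≤ K (cnt k) * (‖x 0 - z‖ * ∏ n ∈ Finset.range (cnt k), K n) :=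
                mul_le_mul_of_nonneg_left ih hKpos
            _ = ‖x 0 - z‖ * ∏ n ∈ Finset.range (cnt k + 1), K n := by
                rw [Finset.prod_range_succ]; ring
  have hprod1 : ∀ m, 1 ≤ ∏ n ∈ Finset.range m, K n := by
    intro m
    induction m with
    | zero => simp
    | succ m ih =>
      rw [Finset.prod_range_succ]
      nlinarith [hK1 m]
  have hprodmono : ∀ m₁ m₂, m₁ ≤ m₂ →
      (∏ n ∈ Finset.range m₁, K n) ≤ ∏ n ∈ Finset.range m₂, K n := by
    intro m₁ m₂ h
    induction m₂, h using Nat.le_induction with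
    | base => exact le_rfl
    | succ m₂ hm ih =>
      rw [Finset.prod_range_succ]
      nlinarith [hK1 m₂, hprod1 m₁, hprod1 m₂]
  have hxB : ∀ k, ‖x k - z‖ ≤ B := by
    intro k
    refine le_trans (hxb k) (mul_le_mul_of_nonneg_left ?_ (norm_nonneg _))
    exact hprodmono _ _ (min_le_right _ _)
  have hbounded : Bornology.IsBounded (Set.range x) := by
    rw [isBounded_iff_forall_norm_le]
    refine ⟨B + ‖z‖, ?_⟩
    rintro _ ⟨k, rfl⟩
    calc ‖x k‖ = ‖x k - z + z‖ := by rw [sub_add_cancel]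
      _ ≤ ‖x k - z‖ + ‖z‖ := norm_add_le _ _
      _ ≤ B + ‖z‖ := by linarith [hxB k]
  refine ⟨hbounded, ?_⟩
  by_contra hcon
  push_neg at hcon
  have hnotC : ∀ k, x k ∉ ⋂ i, {u | f i u ≤ 0} := by
    intro k h
    exact hcon k ⟨h, hxQ k⟩
  -- uniform bound on subgradients along the trajectory
  obtain ⟨G0, hG0⟩ := isBounded_iff_forall_norm_le.1
    (hsubbd (Metric.closedBall z B) Metric.isBounded_closedBall)
  set G : ℝ := max G0 1 with hGdef
  have hG1 : 0 < G := lt_of_lt_of_le one_pos (le_max_right _ _)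
  have hGg : ∀ k i, ‖g i (x k)‖ ≤ G := by
    intro k i
    have hmem : g i (x k) ∈ {gv : H | ∃ i, ∃ u ∈ Metric.closedBall z B,
        ∀ yy, f i u + ⟪gv, yy - u⟫ ≤ f i yy} :=
      ⟨i, x k, by rw [Metric.mem_closedBall, dist_eq_norm]; exact hxB k,
        fun yy => hg i (x k) yy⟩
    exact le_trans (hG0 _ hmem) (le_max_left _ _)
  -- the set of correction steps is infinite
  have hchanges : {k | x k ≠ x (k + 1)}.Infinite := by
    by_contra hfin
    rw [Set.not_infinite] at hfin
    obtain ⟨K₁, hK₁⟩ : ∃ K₁, ∀ k ≥ K₁, x k = x (k + 1) := by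
      obtain ⟨K₁, hK₁⟩ := hfin.bddAbove
      refine ⟨K₁ + 1, fun k hk => ?_⟩
      by_contra h
      have := hK₁ (show k ∈ {k | x k ≠ x (k + 1)} from h)
      omega
    have hconst : ∀ k, K₁ ≤ k → x k = x K₁ := by
      intro k hk
      induction k, hk using Nat.le_induction with
      | base => rfl
      | succ n hn ih => rw [← hK₁ n hn]; exact ih
    obtain ⟨m, hm, hmge⟩ : ∃ m ∈ {k : ℕ | ∃ i ∈ Ik k (x K₁), 0 < f i (x K₁)}, K₁ ≤ m := by
      by_contra h
      push_neg at h
      exact hwm (x K₁) (hnotC K₁)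
        (Set.Finite.subset (Set.finite_Iio K₁) (fun m hm => h m hm))
    obtain ⟨i, hi, hfi⟩ := hm
    have hxm : x m = x K₁ := hconst m hmge
    have := hchange m i (by rw [hxm]; exact hi) (by rw [hxm]; exact hfi)
    exact this (hK₁ m hmge).symm
  -- the counter is unbounded
  have hcntub : ∀ m, ∃ k, m ≤ cnt k := by
    intro m
    induction m with
    | zero => exact ⟨0, Nat.zero_le _⟩
    | succ m ih =>
      obtain ⟨k, hk⟩ := ih
      obtain ⟨j, hj, hkj⟩ : ∃ j, x j ≠ x (j + 1) ∧ k ≤ j := by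
        by_contra h
        push_neg at h
        exact hchanges (Set.Finite.subset (Set.finite_Iio k) (fun j hj => h j hj))
      refine ⟨j + 1, ?_⟩
      have h1 : cnt (j + 1) = cnt j + 1 := by rw [hcnts j, if_neg hj]
      have h2 := hcntmono hkj
      omega
  -- for every m there is a correction step with counter value m
  have hφex : ∀ m, ∃ k, cnt k = m ∧ x k ≠ x (k + 1) := by
    intro m
    obtain ⟨k, hk⟩ := hcntub (m + 1)
    have : ∀ k, m + 1 ≤ cnt k → ∃ j, cnt j = m ∧ x j ≠ x (j + 1) := by
      intro k
      induction k with
      | zero =>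
        intro h
        rw [hcnt0] at h
        omega
      | succ k ih =>
        intro h
        by_cases hk' : m + 1 ≤ cnt k
        · exact ih hk'
        · have hrec := hcnts k
          by_cases hx' : x k = x (k + 1)
          · rw [if_pos hx'] at hrec
            omega
          · rw [if_neg hx'] at hrec
            exact ⟨k, by omega, hx'⟩
    exact this k hk
  choose φ hφ1 hφ2 using hφex
  have hφmono : ∀ m, φ m < φ (m + 1) := by
    intro m
    by_contra h
    push_neg at h
    have := hcntmono h
    rw [hφ1, hφ1] at this
    omega
  have hcntφ1 : ∀ m, cnt (φ m + 1) = m + 1 := by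
    intro m
    rw [hcnts (φ m), if_neg (hφ2 m), hφ1]
  -- x is constant between consecutive correction steps
  have hconstbetween : ∀ m, x (φ (m + 1)) = x (φ m + 1) := by
    intro m
    have key : ∀ p, φ m + 1 + p ≤ φ (m + 1) → x (φ m + 1 + p) = x (φ m + 1) := by
      intro p
      induction p with
      | zero => intro _; rfl
      | succ p ih =>
        intro hp
        have hple : φ m + 1 + p ≤ φ (m + 1) := by omega
        have hnc : x (φ m + 1 + p) = x (φ m + 1 + p + 1) := by
          by_contra hne
          have h1 : cnt (φ m + 1 + p + 1) = cnt (φ m + 1 + p) + 1 := by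
            rw [hcnts, if_neg hne]
          have h2 : m + 1 ≤ cnt (φ m + 1 + p) := by
            have := hcntmono (show φ m + 1 ≤ φ m + 1 + p by omega)
            rw [hcntφ1 m] at this
            exact this
          have h3 : cnt (φ m + 1 + p + 1) ≤ cnt (φ (m + 1)) := hcntmono (by omega)
          rw [hφ1] at h3
          omega
        calc x (φ m + 1 + (p + 1)) = x (φ m + 1 + p) := hnc.symm
          _ = x (φ m + 1) := ih hple
    have hlt := hφmono m
    have := key (φ (m + 1) - (φ m + 1)) (by omega)
    rwa [show φ m + 1 + (φ (m + 1) - (φ m + 1)) = φ (m + 1) by omega] at this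
  -- quantitative decrease at correction steps with large counter
  set c : ℝ := δ * lam0 / G ^ 2 with hcdef
  have hc : 0 < c := by rw [hcdef]; positivity
  have hdec : ∀ m, N₀ ≤ m →
      ‖x (φ (m + 1)) - z‖ ^ 2 ≤ ‖x (φ m) - z‖ ^ 2 - c * (α m * r m) := by
    intro m hm
    rw [hconstbetween m]
    have hcntk : cnt (φ m) = m := hφ1 m
    have hviol : ∃ i ∈ Ik (φ m) (x (φ m)), 0 < f i (x (φ m)) := by
      by_contra h
      push_neg at h
      exact hφ2 m (heffne (φ m) (fun i hi => not_lt.2 (h i hi))).symm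
    obtain ⟨i, hi, hfi⟩ := hviol
    have hSk : lam0 * (r m / G ^ 2) ≤ S (φ m) := by
      have h1 := hSlb (φ m) i hi hfi
      rw [hcntk] at h1
      have hgpos : 0 < ‖g i (x (φ m))‖ := by
        by_contra hgz
        push_neg at hgz
        have hg0 : g i (x (φ m)) = 0 := by
          have := norm_nonneg (g i (x (φ m)))
          exact norm_eq_zero.1 (le_antisymm hgz this)
        have h2 := hg i (x (φ m)) z
        rw [hg0] at h2
        simp only [inner_zero_left, add_zero] at h2
        have := hfz i
        linarith
      have h2 : lam0 * (r m / G ^ 2) ≤ lam i (φ m) (x (φ m)) * (r m / ‖g i (x (φ m))‖ ^ 2) := by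
        have hle1 := hlamlb i (φ m) (x (φ m)) hi hfi
        have hle2 : r m / G ^ 2 ≤ r m / ‖g i (x (φ m))‖ ^ 2 := by
          apply div_le_div_of_nonneg_left (hrpos m).le (by positivity)
          exact pow_le_pow_left₀ (norm_nonneg _) (hGg (φ m) i) 2
        exact mul_le_mul hle1 hle2 (div_nonneg (hrpos m).le (by positivity))
          ((hlam01 i (φ m) (x (φ m))).1)
      linarith
    have hsq' := hsq (φ m)
    rw [hcntk] at hsq'
    have hproj' := hproj2 (φ m)
    have hrm : r m < δ / 2 := hN₀ m hm
    have hα1 := (hα m).1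
    have hα2 := (hα m).2
    have hSk0 := hS0 (φ m)
    have t1 : 2 * α m * (r m - δ) ≤ -(α m * δ) := by nlinarith [hrpos m]
    have t2 : 2 * α m * (r m - δ) * S (φ m) ≤ -(α m * δ) * S (φ m) :=
      mul_le_mul_of_nonneg_right t1 hSk0
    have t3 : -(α m * δ) * S (φ m) ≤ -(α m * δ) * (lam0 * (r m / G ^ 2)) := by
      apply mul_le_mul_of_nonpos_left hSk
      nlinarith
    have t4 : -(α m * δ) * (lam0 * (r m / G ^ 2)) = -(c * (α m * r m)) := by
      rw [hcdef]
      field_simp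
    calc ‖x (φ m + 1) - z‖ ^ 2 ≤ ‖y (φ m) - z‖ ^ 2 := hproj'
      _ ≤ ‖x (φ m) - z‖ ^ 2 + 2 * α m * (r m - δ) * S (φ m) := hsq'
      _ ≤ ‖x (φ m) - z‖ ^ 2 + -(c * (α m * r m)) :=
          add_le_add_right (le_trans t2 (t4 ▸ t3)) _
      _ = ‖x (φ m) - z‖ ^ 2 - c * (α m * r m) := by ring
  -- telescoping and contradiction with divergence
  have htel : ∀ n, N₀ ≤ n → ‖x (φ n) - z‖ ^ 2 ≤ ‖x (φ N₀) - z‖ ^ 2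
      - c * ((∑ k ∈ Finset.range n, α k * r k) - ∑ k ∈ Finset.range N₀, α k * r k) := by
    intro n hn
    induction n, hn using Nat.le_induction with
    | base => simp
    | succ n hn ih =>
      have hd := hdec n hn
      have e : c * ((∑ k ∈ Finset.range (n + 1), α k * r k) - ∑ k ∈ Finset.range N₀, α k * r k)
          = c * ((∑ k ∈ Finset.range n, α k * r k) - ∑ k ∈ Finset.range N₀, α k * r k)
            + c * (α n * r n) := by
        rw [Finset.sum_range_succ]
        ring
      linarith
  obtain ⟨n, hnge, hnbig⟩ : ∃ n, N₀ ≤ n ∧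
      ‖x (φ N₀) - z‖ ^ 2 / c + (∑ k ∈ Finset.range N₀, α k * r k)
        < ∑ k ∈ Finset.range n, α k * r k := by
    have h1 := (Filter.tendsto_atTop.1 hdiv)
      (‖x (φ N₀) - z‖ ^ 2 / c + (∑ k ∈ Finset.range N₀, α k * r k) + 1)
    obtain ⟨n0, hn0⟩ := Filter.eventually_atTop.1 h1
    refine ⟨max n0 N₀, le_max_right _ _, ?_⟩
    have := hn0 (max n0 N₀) (le_max_left _ _)
    linarith
  have hfinal := htel n hnge
  have hq1 : 0 ≤ ‖x (φ n) - z‖ ^ 2 := sq_nonneg _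
  have hq2 : ‖x (φ N₀) - z‖ ^ 2 = c * (‖x (φ N₀) - z‖ ^ 2 / c) := by
    field_simp
  nlinarith [mul_lt_mul_of_pos_left (sub_pos.2 hnbig) hc]
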